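/- Let n ≥ 4 and let Σ = {x ∈ ℝ^{n+1} : x_{n+1} = x_1 x_n + Σ_{i=2}^{n−1} x_i² + x_1³}. Then Σ is affinely homogeneous: for any two points a, b ∈ Σ there exists an affine bijection of ℝ^{n+1} that maps Σ onto Σ and maps a to b. -/

import Mathlib

/-- The hypersurface `Σ = {x ∈ ℝ^{n+1} : x_{n+1} = x₁ x_n + Σ_{i=2}^{n−1} x_i² + x₁³}`
(coordinates are 0-indexed: `x₁ = x 0`, `x_i = x (i-1)`, `x_n = x (n-1)`, `x_{n+1} = x n`). -/
def sigmaCubic (n : ℕ) (hn : 4 ≤ n) : Set (Fin (n + 1) → ℝ) :=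
  {x | x (Fin.last n) = x 0 * x ⟨n - 1, by omega⟩ +
    (∑ i : Fin (n + 1), if 1 ≤ (i : ℕ) ∧ (i : ℕ) ≤ n - 2 then x i ^ 2 else 0) +
    x 0 ^ 3}

namespace SigmaCubicAux

/-- Cross term `∑ t_i x_i` over the middle indices. -/
def Smap (n : ℕ) (t x : Fin (n + 1) → ℝ) : ℝ :=
  ∑ i : Fin (n + 1), if 1 ≤ (i : ℕ) ∧ (i : ℕ) ≤ n - 2 then t i * x i else 0

/-- Sum of squares over the middle indices. -/
def Qsum (n : ℕ) (x : Fin (n + 1) → ℝ) : ℝ :=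
  ∑ i : Fin (n + 1), if 1 ≤ (i : ℕ) ∧ (i : ℕ) ≤ n - 2 then x i ^ 2 else 0

variable {n : ℕ}

lemma Smap_congr {t x y : Fin (n + 1) → ℝ}
    (h : ∀ i : Fin (n + 1), 1 ≤ (i : ℕ) → (i : ℕ) ≤ n - 2 → x i = y i) :
    Smap n t x = Smap n t y := by
  unfold Smap
  refine Finset.sum_congr rfl fun i _ => ?_
  split_ifs with hi
  · rw [h i hi.1 hi.2]
  · rfl

lemma Smap_add (t x y : Fin (n + 1) → ℝ) :
    Smap n t (x + y) = Smap n t x + Smap n t y := by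
  unfold Smap
  rw [← Finset.sum_add_distrib]
  refine Finset.sum_congr rfl fun i _ => ?_
  split_ifs <;> simp <;> ring

lemma Smap_smul (t : Fin (n + 1) → ℝ) (c : ℝ) (x : Fin (n + 1) → ℝ) :
    Smap n t (c • x) = c * Smap n t x := by
  unfold Smap
  rw [Finset.mul_sum]
  refine Finset.sum_congr rfl fun i _ => ?_
  split_ifs <;> simp <;> ring

lemma Qsum_eq (t x y : Fin (n + 1) → ℝ)
    (h : ∀ i : Fin (n + 1), 1 ≤ (i : ℕ) → (i : ℕ) ≤ n - 2 → y i = x i + t i) :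
    Qsum n y = Qsum n x + 2 * Smap n t x + Qsum n t := by
  unfold Qsum Smap
  rw [Finset.mul_sum, ← Finset.sum_add_distrib, ← Finset.sum_add_distrib]
  refine Finset.sum_congr rfl fun i _ => ?_
  split_ifs with hi
  · rw [h i hi.1 hi.2]; ring
  · ring

/-- Forward linear part. -/
def Fl (n : ℕ) (t : Fin (n + 1) → ℝ) : (Fin (n + 1) → ℝ) →ₗ[ℝ] (Fin (n + 1) → ℝ) where
  toFun x := fun k =>
    x k + (if (k : ℕ) = n - 1 then -3 * t 0 * x 0
      else if (k : ℕ) = n then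
        t ⟨n - 1, by omega⟩ * x 0 + t 0 * x ⟨n - 1, by omega⟩ + 2 * Smap n t x
      else 0)
  map_add' x y := by
    funext k
    simp only [Pi.add_apply, Smap_add]
    split_ifs <;> ring
  map_smul' c x := by
    funext k
    simp only [Pi.smul_apply, smul_eq_mul, RingHom.id_apply, Smap_smul]
    split_ifs <;> ring

/-- Inverse linear part. -/
def Gl (n : ℕ) (t : Fin (n + 1) → ℝ) : (Fin (n + 1) → ℝ) →ₗ[ℝ] (Fin (n + 1) → ℝ) where
  toFun y := fun k =>
    y k + (if (k : ℕ) = n - 1 then 3 * t 0 * y 0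
      else if (k : ℕ) = n then
        -(t ⟨n - 1, by omega⟩ * y 0) - t 0 * (y ⟨n - 1, by omega⟩ + 3 * t 0 * y 0)
          - 2 * Smap n t y
      else 0)
  map_add' x y := by
    funext k
    simp only [Pi.add_apply, Smap_add]
    split_ifs <;> ring
  map_smul' c x := by
    funext k
    simp only [Pi.smul_apply, smul_eq_mul, RingHom.id_apply, Smap_smul]
    split_ifs <;> ring

lemma Fl_apply_ne (t x : Fin (n + 1) → ℝ) (k : Fin (n + 1))
    (h1 : (k : ℕ) ≠ n - 1) (h2 : (k : ℕ) ≠ n) : Fl n t x k = x k := by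
  simp [Fl, h1, h2]

lemma Gl_apply_ne (t y : Fin (n + 1) → ℝ) (k : Fin (n + 1))
    (h1 : (k : ℕ) ≠ n - 1) (h2 : (k : ℕ) ≠ n) : Gl n t y k = y k := by
  simp [Gl, h1, h2]

lemma Fl_apply_N (hn : 4 ≤ n) (t x : Fin (n + 1) → ℝ) :
    Fl n t x ⟨n - 1, by omega⟩ = x ⟨n - 1, by omega⟩ + -3 * t 0 * x 0 := by
  simp [Fl]

lemma Gl_apply_N (hn : 4 ≤ n) (t y : Fin (n + 1) → ℝ) :
    Gl n t y ⟨n - 1, by omega⟩ = y ⟨n - 1, by omega⟩ + 3 * t 0 * y 0 := by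
  simp [Gl]

lemma Fl_apply_last (hn : 4 ≤ n) (t x : Fin (n + 1) → ℝ) :
    Fl n t x (Fin.last n) = x (Fin.last n) +
      (t ⟨n - 1, by omega⟩ * x 0 + t 0 * x ⟨n - 1, by omega⟩ + 2 * Smap n t x) := by
  have h3 : ¬ (n = n - 1) := by omega
  simp [Fl, Fin.val_last, h3]

lemma Gl_apply_last (hn : 4 ≤ n) (t y : Fin (n + 1) → ℝ) :
    Gl n t y (Fin.last n) = y (Fin.last n) +
      (-(t ⟨n - 1, by omega⟩ * y 0) - t 0 * (y ⟨n - 1, by omega⟩ + 3 * t 0 * y 0)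
        - 2 * Smap n t y) := by
  have h3 : ¬ (n = n - 1) := by omega
  simp [Gl, Fin.val_last, h3]

lemma val0 (hn : 4 ≤ n) : (((0 : Fin (n + 1))) : ℕ) = 0 := rfl

lemma zero_ne1 (hn : 4 ≤ n) : (((0 : Fin (n + 1))) : ℕ) ≠ n - 1 := by
  simp; omega

lemma zero_ne2 (hn : 4 ≤ n) : (((0 : Fin (n + 1))) : ℕ) ≠ n := by
  simp; omega

lemma Smap_Gl (hn : 4 ≤ n) (t y : Fin (n + 1) → ℝ) :
    Smap n t (Gl n t y) = Smap n t y := by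
  refine Smap_congr fun i h1 h2 => ?_
  exact Gl_apply_ne t y i (by omega) (by omega)

lemma Smap_Fl (hn : 4 ≤ n) (t x : Fin (n + 1) → ℝ) :
    Smap n t (Fl n t x) = Smap n t x := by
  refine Smap_congr fun i h1 h2 => ?_
  exact Fl_apply_ne t x i (by omega) (by omega)

lemma Fl_Gl (hn : 4 ≤ n) (t : Fin (n + 1) → ℝ) :
    (Fl n t).comp (Gl n t) = LinearMap.id := by
  refine LinearMap.ext fun y => funext fun k => ?_
  simp only [LinearMap.comp_apply, LinearMap.id_apply]
  rcases eq_or_ne (k : ℕ) (n - 1) with hk | hk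
  · have hkeq : k = ⟨n - 1, by omega⟩ := Fin.ext hk
    rw [hkeq]
    rw [Fl_apply_N hn, Gl_apply_N hn,
      Gl_apply_ne t y 0 (zero_ne1 hn) (zero_ne2 hn)]
    ring
  rcases eq_or_ne (k : ℕ) n with hk2 | hk2
  · have hkeq : k = Fin.last n := Fin.ext hk2
    rw [hkeq]
    rw [Fl_apply_last hn, Gl_apply_last hn, Smap_Gl hn,
      Gl_apply_ne t y 0 (zero_ne1 hn) (zero_ne2 hn), Gl_apply_N hn]
    ring
  · rw [Fl_apply_ne _ _ _ hk hk2, Gl_apply_ne _ _ _ hk hk2]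

lemma Gl_Fl (hn : 4 ≤ n) (t : Fin (n + 1) → ℝ) :
    (Gl n t).comp (Fl n t) = LinearMap.id := by
  refine LinearMap.ext fun x => funext fun k => ?_
  simp only [LinearMap.comp_apply, LinearMap.id_apply]
  rcases eq_or_ne (k : ℕ) (n - 1) with hk | hk
  · have hkeq : k = ⟨n - 1, by omega⟩ := Fin.ext hk
    rw [hkeq]
    rw [Gl_apply_N hn, Fl_apply_N hn,
      Fl_apply_ne t x 0 (zero_ne1 hn) (zero_ne2 hn)]
    ring
  rcases eq_or_ne (k : ℕ) n with hk2 | hk2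
  · have hkeq : k = Fin.last n := Fin.ext hk2
    rw [hkeq]
    rw [Gl_apply_last hn, Fl_apply_last hn, Smap_Fl hn,
      Fl_apply_ne t x 0 (zero_ne1 hn) (zero_ne2 hn), Fl_apply_N hn]
    ring
  · rw [Gl_apply_ne _ _ _ hk hk2, Fl_apply_ne _ _ _ hk hk2]

/-- The linear part as a linear equivalence. -/
noncomputable def Le (hn : 4 ≤ n) (t : Fin (n + 1) → ℝ) :
    (Fin (n + 1) → ℝ) ≃ₗ[ℝ] (Fin (n + 1) → ℝ) :=
  LinearEquiv.ofLinear (Fl n t) (Gl n t) (Fl_Gl hn t) (Gl_Fl hn t)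

/-- The affine equivalence `x ↦ Fl t x + t`. -/
noncomputable def phi (hn : 4 ≤ n) (t : Fin (n + 1) → ℝ) :
    (Fin (n + 1) → ℝ) ≃ᵃ[ℝ] (Fin (n + 1) → ℝ) :=
  (Le hn t).toAffineEquiv.trans (AffineEquiv.constVAdd ℝ (Fin (n + 1) → ℝ) t)

lemma phi_apply (hn : 4 ≤ n) (t x : Fin (n + 1) → ℝ) (k : Fin (n + 1)) :
    phi hn t x k = t k + Fl n t x k := by
  simp [phi, Le, AffineEquiv.constVAdd]
  rfl

lemma phi_zero (hn : 4 ≤ n) (t : Fin (n + 1) → ℝ) : phi hn t 0 = t := by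
  funext k
  rw [phi_apply hn t 0 k]
  simp

lemma mem_iff (hn : 4 ≤ n) {t : Fin (n + 1) → ℝ} (ht : t ∈ sigmaCubic n hn)
    (x : Fin (n + 1) → ℝ) :
    x ∈ sigmaCubic n hn ↔ phi hn t x ∈ sigmaCubic n hn := by
  simp only [sigmaCubic, Set.mem_setOf_eq] at ht ⊢
  change _ ↔ _ = _ + Qsum n (phi hn t x) + _
  change _ = _ + Qsum n t + _ at ht
  change _ = _ + Qsum n x + _ ↔ _
  have h0 : phi hn t x 0 = x 0 + t 0 := by
    rw [phi_apply, Fl_apply_ne t x 0 (zero_ne1 hn) (zero_ne2 hn)]; ring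
  have hN : phi hn t x ⟨n - 1, by omega⟩ =
      x ⟨n - 1, by omega⟩ + -3 * t 0 * x 0 + t ⟨n - 1, by omega⟩ := by
    rw [phi_apply, Fl_apply_N hn]; ring
  have hL : phi hn t x (Fin.last n) = x (Fin.last n) +
      (t ⟨n - 1, by omega⟩ * x 0 + t 0 * x ⟨n - 1, by omega⟩ + 2 * Smap n t x)
      + t (Fin.last n) := by
    rw [phi_apply, Fl_apply_last hn]; ring
  have hQ : Qsum n (phi hn t x) = Qsum n x + 2 * Smap n t x + Qsum n t := by
    refine Qsum_eq t x _ fun i h1 h2 => ?_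
    rw [phi_apply, Fl_apply_ne t x i (by omega) (by omega)]; ring
  rw [h0, hN, hL, hQ]
  constructor
  · intro h
    linear_combination h + ht
  · intro h
    linear_combination h - ht

lemma image_phi (hn : 4 ≤ n) {t : Fin (n + 1) → ℝ} (ht : t ∈ sigmaCubic n hn) :
    phi hn t '' sigmaCubic n hn = sigmaCubic n hn := by
  ext y
  constructor
  · rintro ⟨x, hx, rfl⟩
    exact (mem_iff hn ht x).mp hx
  · intro hy
    refine ⟨(phi hn t).symm y, ?_, (phi hn t).apply_symm_apply y⟩
    rw [mem_iff hn ht, (phi hn t).apply_symm_apply]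
    exact hy

lemma image_phi_symm (hn : 4 ≤ n) {t : Fin (n + 1) → ℝ} (ht : t ∈ sigmaCubic n hn) :
    (phi hn t).symm '' sigmaCubic n hn = sigmaCubic n hn := by
  ext y
  constructor
  · rintro ⟨x, hx, rfl⟩
    rw [mem_iff hn ht, (phi hn t).apply_symm_apply]
    exact hx
  · intro hy
    exact ⟨phi hn t y, (mem_iff hn ht y).mp hy, (phi hn t).symm_apply_apply y⟩

end SigmaCubicAux

open SigmaCubicAux in
/-- Hypersurface (2) of Theorem 2: `Σ` is affinely homogeneous — any point can be mapped
to any other point by an affine bijection of `ℝ^{n+1}` preserving `Σ`. -/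
theorem sigmaCubic_affinely_homogeneous (n : ℕ) (hn : 4 ≤ n) :
    ∀ a ∈ sigmaCubic n hn, ∀ b ∈ sigmaCubic n hn,
      ∃ φ : (Fin (n + 1) → ℝ) ≃ᵃ[ℝ] (Fin (n + 1) → ℝ),
        φ '' sigmaCubic n hn = sigmaCubic n hn ∧ φ a = b := by
  intro a ha b hb
  refine ⟨(phi hn a).symm.trans (phi hn b), ?_, ?_⟩
  · rw [AffineEquiv.coe_trans, Set.image_comp, image_phi_symm hn ha, image_phi hn hb]
  · have h0 : (phi hn a).symm a = 0 := by
      have h := (phi hn a).symm_apply_apply 0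
      rw [phi_zero] at h
      exact h
    rw [AffineEquiv.trans_apply, h0, phi_zero]
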